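/- arXiv:0905.1738 — 2 statements merged into one kernel-verified Lean document; each statement's English description precedes it below -/
import Mathlib

section
/- Let $N$, $\{Q, Q_i\}$, $\{C, C_i\}$ be as in the weighted branching process setup with $W_0 = Q$, $W_n \stackrel{\mathcal{D}}{=} \sum_{i=1}^N C_i W_{n-1,i}$. Suppose $E[Q^p] < \infty$, $E[N^p] < \infty$, and $E[N]\max\{E[C^p], E[C]\} < 1$ for some integer $p \geq 2$. Then there exists a constant $K_p > 0$ such that $E[W_n^p] \leq K_p \left( E[N]\max\{E[C], E[C^p]\} \right)^n$ for all $n \geq 0$. -/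
open MeasureTheory ProbabilityTheory Finset
open scoped ENNReal NNReal

/-- The distributional recursion defining the generation weights of a weighted
branching process: `W 0` is distributed as `Q`, and `W (n+1)` is distributed as
`∑_{i=1}^{N'} C'_i W'_{n,i}` where `N'` is a copy of `N`, the `C'_i` are iid copies
of `C`, the `W'_i` are iid copies of `W n`, and all of them are mutually independent. -/
def IsWBP {Ω : Type*} [MeasureSpace Ω]
    (N : Ω → ℕ) (C : Ω → ℝ) (Q : Ω → ℝ) (W : ℕ → Ω → ℝ) : Prop :=
  Measurable N ∧ Measurable C ∧ Measurable Q ∧ (∀ n, Measurable (W n)) ∧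
  (∀ ω, 0 ≤ C ω) ∧ (∀ ω, 0 ≤ Q ω) ∧ (∀ n ω, 0 ≤ W n ω) ∧
  Measure.map (W 0) ℙ = Measure.map Q ℙ ∧
  ∀ n, ∃ (N' : Ω → ℕ) (C' : ℕ → Ω → ℝ) (W' : ℕ → Ω → ℝ),
    Measurable N' ∧ (∀ i, Measurable (C' i)) ∧ (∀ i, Measurable (W' i)) ∧
    Measure.map N' ℙ = Measure.map N ℙ ∧
    (∀ i, Measure.map (C' i) ℙ = Measure.map C ℙ) ∧
    (∀ i, Measure.map (W' i) ℙ = Measure.map (W n) ℙ) ∧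
    iIndepFun
      (fun j : (ℕ ⊕ ℕ) ⊕ Unit =>
        Sum.elim (Sum.elim C' W') (fun _ ω => (N' ω : ℝ)) j) ℙ ∧
    Measure.map (W (n + 1)) ℙ =
      Measure.map (fun ω => ∑ i ∈ Finset.range (N' ω), C' i ω * W' i ω) ℙ

section AuxLemmas

set_option linter.unusedSectionVars false
set_option linter.unusedVariables false

variable {Ω : Type*} [MeasureSpace Ω] [IsProbabilityMeasure (ℙ : Measure Ω)]

lemma lintegral_finset_prod_of_iIndepFun {ι : Type*} {X : ι → Ω → ℝ}
    (h : iIndepFun X ℙ) (hX : ∀ i, Measurable (X i))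
    (φ : ι → ℝ → ℝ≥0∞) (hφ : ∀ i, Measurable (φ i)) (T : Finset ι) :
    ∫⁻ ω, ∏ j ∈ T, φ j (X j ω) ∂ℙ = ∏ j ∈ T, ∫⁻ ω, φ j (X j ω) ∂ℙ := by
  classical
  induction T using Finset.induction_on with
  | empty => simp
  | insert _ _ hi =>
    rename_i i T ih
    have hind : IndepFun (fun ω => φ i (X i ω)) (fun ω => ∏ j ∈ T, φ j (X j ω)) ℙ := by
      have h2 := h.indepFun_finset {i} T (by simpa using hi) hX
      have g1 : Measurable (fun v : {x // x ∈ ({i} : Finset ι)} → ℝ =>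
          φ i (v ⟨i, Finset.mem_singleton_self i⟩)) :=
        (hφ i).comp (measurable_pi_apply _)
      have g2 : Measurable (fun v : {x // x ∈ T} → ℝ =>
          ∏ j ∈ T.attach, φ (j : ι) (v j)) :=
        Finset.measurable_prod _ (fun j _ => (hφ (j : ι)).comp (measurable_pi_apply _))
      have h3 := h2.comp g1 g2
      have e1 : (fun ω => φ i (X i ω)) =
          ((fun v : {x // x ∈ ({i} : Finset ι)} → ℝ => φ i (v ⟨i, Finset.mem_singleton_self i⟩)) ∘
            fun a j => X (j : ι) a) := rfl
      have e2 : (fun ω => ∏ j ∈ T, φ j (X j ω)) =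
          ((fun v : {x // x ∈ T} → ℝ => ∏ j ∈ T.attach, φ (j : ι) (v j)) ∘
            fun a j => X (j : ι) a) := by
        funext ω
        simp only [Function.comp_apply]
        rw [← Finset.prod_attach T (fun j => φ j (X j ω))]
      rw [e1, e2]; exact h3
    simp only [Finset.prod_insert hi]
    have hf : Measurable (fun ω => φ i (X i ω)) := (hφ i).comp (hX i)
    have hg : Measurable (fun ω => ∏ j ∈ T, φ j (X j ω)) :=
      Finset.measurable_prod _ (fun j _ => (hφ j).comp (hX j))
    have hmul := lintegral_mul_eq_lintegral_mul_lintegral_of_indepFun hf hg hind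
    simp only [Pi.mul_apply] at hmul
    rw [hmul, ih]

lemma lintegral_pow_le_max {f : Ω → ℝ≥0∞} (hf : Measurable f) {m p : ℕ}
    (h1 : 1 ≤ m) (hmp : m ≤ p) :
    ∫⁻ ω, f ω ^ m ∂ℙ ≤ max (∫⁻ ω, f ω ∂ℙ) (∫⁻ ω, f ω ^ p ∂ℙ) := by
  rcases eq_or_lt_of_le h1 with h1' | h1'
  · simp only [← h1', pow_one]; exact le_max_left _ _
  rcases eq_or_lt_of_le hmp with hmp' | hmp'
  · subst hmp'; exact le_max_right _ _
  set M := max (∫⁻ ω, f ω ∂ℙ) (∫⁻ ω, f ω ^ p ∂ℙ) with hM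
  rcases eq_top_or_lt_top M with hMt | hMt
  · rw [hMt]; exact le_top
  have hmR : (1:ℝ) < (m:ℝ) := by exact_mod_cast h1'
  have hpm : (m:ℝ) < (p:ℝ) := by exact_mod_cast hmp'
  have hpm0 : (0:ℝ) < (p:ℝ) - m := by linarith
  have hm10 : (0:ℝ) < (m:ℝ) - 1 := by linarith
  have hp10 : (0:ℝ) < (p:ℝ) - 1 := by linarith
  set pr : ℝ := ((p:ℝ) - 1) / ((p:ℝ) - m) with hpr
  set qr : ℝ := ((p:ℝ) - 1) / ((m:ℝ) - 1) with hqr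
  have hconj : pr.HolderConjugate qr := by
    rw [Real.holderConjugate_iff]
    constructor
    · rw [hpr, lt_div_iff₀ hpm0]; linarith
    · rw [hpr, hqr]
      rw [inv_div, inv_div]
      rw [div_add_div _ _ (ne_of_gt hp10) (ne_of_gt hp10), div_eq_one_iff_eq (by positivity)]
      ring
  have key := ENNReal.lintegral_mul_le_Lp_mul_Lq (ℙ : Measure Ω) hconj
    (f := fun ω => f ω ^ (((p:ℝ) - m) / ((p:ℝ) - 1)))
    (g := fun ω => f ω ^ ((p:ℝ) * ((m:ℝ) - 1) / ((p:ℝ) - 1)))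
    ((hf.pow measurable_const).aemeasurable) ((hf.pow measurable_const).aemeasurable)
  have e0 : ∀ ω : Ω, f ω ^ (((p:ℝ) - m) / ((p:ℝ) - 1)) *
      f ω ^ ((p:ℝ) * ((m:ℝ) - 1) / ((p:ℝ) - 1)) = f ω ^ m := by
    intro ω
    rw [← ENNReal.rpow_add_of_nonneg _ _ (by positivity) (by positivity)]
    rw [← add_div]
    have : ((p:ℝ) - m + (p:ℝ) * ((m:ℝ) - 1)) / ((p:ℝ) - 1) = (m:ℝ) := by
      field_simp; ring
    rw [this, ENNReal.rpow_natCast]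
  have e1 : ∀ ω : Ω, (f ω ^ (((p:ℝ) - m) / ((p:ℝ) - 1))) ^ pr = f ω := by
    intro ω
    rw [← ENNReal.rpow_mul]
    have : ((p:ℝ) - m) / ((p:ℝ) - 1) * pr = 1 := by
      rw [hpr]; field_simp
    rw [this, ENNReal.rpow_one]
  have e2 : ∀ ω : Ω, (f ω ^ ((p:ℝ) * ((m:ℝ) - 1) / ((p:ℝ) - 1))) ^ qr = f ω ^ p := by
    intro ω
    rw [← ENNReal.rpow_mul]
    have : (p:ℝ) * ((m:ℝ) - 1) / ((p:ℝ) - 1) * qr = (p:ℝ) := by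
      rw [hqr]; first | (field_simp; ring) | field_simp
    rw [this, ENNReal.rpow_natCast]
  simp only [Pi.mul_apply] at key
  calc ∫⁻ ω, f ω ^ m ∂ℙ
      = ∫⁻ ω, f ω ^ (((p:ℝ) - m) / ((p:ℝ) - 1)) * f ω ^ ((p:ℝ) * ((m:ℝ) - 1) / ((p:ℝ) - 1)) ∂ℙ := by
        exact lintegral_congr (fun ω => (e0 ω).symm)
    _ ≤ (∫⁻ ω, (f ω ^ (((p:ℝ) - m) / ((p:ℝ) - 1))) ^ pr ∂ℙ) ^ (1 / pr) *
        (∫⁻ ω, (f ω ^ ((p:ℝ) * ((m:ℝ) - 1) / ((p:ℝ) - 1))) ^ qr ∂ℙ) ^ (1 / qr) := key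
    _ = (∫⁻ ω, f ω ∂ℙ) ^ (1 / pr) * (∫⁻ ω, f ω ^ p ∂ℙ) ^ (1 / qr) := by
        rw [lintegral_congr e1, lintegral_congr e2]
    _ ≤ M ^ (1 / pr) * M ^ (1 / qr) := by
        gcongr
        · exact le_max_left _ _
        · exact le_max_right _ _
    _ = M := by
        rcases eq_or_ne M 0 with hM0 | hM0
        · rw [hM0, ENNReal.zero_rpow_of_pos (by positivity), zero_mul]
        · rw [← ENNReal.rpow_add _ _ hM0 hMt.ne, one_div, one_div,
            hconj.inv_add_inv_eq_one, ENNReal.rpow_one]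

lemma geom_rec {a : ℕ → ℝ≥0∞} {ρ D A0 : ℝ≥0∞} (hρ : ρ < 1) (hA0 : a 0 ≤ A0)
    (hA0f : A0 ≠ ∞) (hDf : D ≠ ∞) (hD0 : ρ = 0 → D = 0)
    (hrec : ∀ n, a (n + 1) ≤ ρ * a n + D * ρ ^ (2 * n)) :
    ∃ K : ℝ≥0∞, K ≠ ∞ ∧ ∀ n, a n ≤ K * ρ ^ n := by
  rcases eq_or_ne ρ 0 with hρ0 | hρ0
  · refine ⟨A0, hA0f, ?_⟩
    intro n
    cases n with
    | zero => simpa using hA0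
    | succ n =>
      have h := hrec n
      rw [hρ0, hD0 hρ0] at h
      simp only [zero_mul, zero_add] at h
      rw [hρ0]
      calc a (n + 1) ≤ 0 := h
        _ ≤ A0 * 0 ^ (n + 1) := zero_le
  · have hρt : ρ ≠ ∞ := (hρ.trans_le le_top).ne
    have main : ∀ n, a n ≤ A0 * ρ ^ n + D * ∑ j ∈ Finset.range n, ρ ^ (n - 1 + j) := by
      intro n
      induction n with
      | zero => simpa using hA0
      | succ n ih =>
        have step1 : a (n + 1) ≤ ρ * (A0 * ρ ^ n + D * ∑ j ∈ Finset.range n, ρ ^ (n - 1 + j))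
            + D * ρ ^ (2 * n) :=
          (hrec n).trans (add_le_add_left (mul_le_mul_right ih ρ) _)
        refine step1.trans (le_of_eq ?_)
        have hmulsum : ρ * (D * ∑ j ∈ Finset.range n, ρ ^ (n - 1 + j))
            = D * ∑ j ∈ Finset.range n, ρ ^ (n + j) := by
          rcases Nat.eq_zero_or_pos n with rfl | hn
          · simp
          · rw [← mul_assoc, mul_comm ρ D, mul_assoc, Finset.mul_sum]
            congr 1
            refine Finset.sum_congr rfl (fun j _ => ?_)
            rw [← pow_succ']
            congr 1
            omega
        rw [mul_add, hmulsum]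
        have : n + 1 - 1 = n := rfl
        rw [this, Finset.sum_range_succ, mul_add (D)]
        have h2n : n + n = 2 * n := by omega
        rw [h2n]
        ring
    refine ⟨A0 + D * ρ⁻¹ * (1 - ρ)⁻¹, ?_, ?_⟩
    · refine ENNReal.add_ne_top.2 ⟨hA0f, ?_⟩
      refine ENNReal.mul_ne_top (ENNReal.mul_ne_top hDf (ENNReal.inv_ne_top.2 hρ0)) ?_
      rw [ENNReal.inv_ne_top]
      simp only [ne_eq, tsub_eq_zero_iff_le, not_le]
      exact hρ
    · intro n
      rcases Nat.eq_zero_or_pos n with rfl | hn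
      · simpa using hA0.trans le_self_add
      refine (main n).trans ?_
      have hsum : ∑ j ∈ Finset.range n, ρ ^ (n - 1 + j) ≤ ρ ^ n * ρ⁻¹ * (1 - ρ)⁻¹ := by
        have h1 : ∀ j : ℕ, ρ ^ (n - 1 + j) = ρ ^ n * ρ⁻¹ * ρ ^ j := by
          intro j
          rw [pow_add]
          congr 1
          have hpow : ρ ^ n = ρ ^ (n - 1) * ρ := by
            rw [← pow_succ]
            congr 1
            omega
          rw [hpow, mul_assoc, ENNReal.mul_inv_cancel hρ0 hρt, mul_one]
        calc ∑ j ∈ Finset.range n, ρ ^ (n - 1 + j)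
            = ρ ^ n * ρ⁻¹ * ∑ j ∈ Finset.range n, ρ ^ j := by
              rw [Finset.mul_sum]; exact Finset.sum_congr rfl (fun j _ => h1 j)
          _ ≤ ρ ^ n * ρ⁻¹ * (1 - ρ)⁻¹ := by
              refine mul_le_mul_right ?_ _
              rw [← ENNReal.tsum_geometric ρ]
              exact ENNReal.sum_le_tsum _
      calc A0 * ρ ^ n + D * ∑ j ∈ Finset.range n, ρ ^ (n - 1 + j)
          ≤ A0 * ρ ^ n + D * (ρ ^ n * ρ⁻¹ * (1 - ρ)⁻¹) :=
            add_le_add_right (mul_le_mul_right hsum D) _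
        _ = (A0 + D * ρ⁻¹ * (1 - ρ)⁻¹) * ρ ^ n := by ring


lemma combine {q k : ℕ} (hq : 1 ≤ q) (u : ℕ → ℝ≥0∞) (B : ℝ≥0∞)
    (hB : ∀ m, 1 ≤ m → m ≤ q - 1 → u m ≤ B) :
    ∑ g ∈ Fintype.piFinset (fun _ : Fin q => Finset.range k),
      ∏ j ∈ Finset.image g Finset.univ, u ((Finset.univ.filter (fun i => g i = j)).card)
    ≤ k * u q + k ^ q * (B ^ 2 * (max B 1) ^ q) := by
  classical
  have hq0 : 0 < q := hq
  set i0 : Fin q := ⟨0, hq0⟩ with hi0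
  set P := Fintype.piFinset (fun _ : Fin q => Finset.range k) with hP
  set F : (Fin q → ℕ) → ℝ≥0∞ := fun g =>
    ∏ j ∈ Finset.image g Finset.univ, u ((Finset.univ.filter (fun i => g i = j)).card) with hF
  have hsplit : ∑ g ∈ P, F g =
      ∑ g ∈ P.filter (fun g => ∀ i, g i = g i0), F g +
      ∑ g ∈ P.filter (fun g => ¬ ∀ i, g i = g i0), F g :=
    (Finset.sum_filter_add_sum_filter_not P _ F).symm
  rw [hsplit]
  gcongr
  -- constant part
  · have hconst : ∀ g ∈ P.filter (fun g => ∀ i, g i = g i0), F g = u q := by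
      intro g hg
      rw [Finset.mem_filter] at hg
      obtain ⟨hgP, hgc⟩ := hg
      have himg : Finset.image g Finset.univ = {g i0} := by
        apply Finset.eq_singleton_iff_unique_mem.2
        constructor
        · exact Finset.mem_image_of_mem g (Finset.mem_univ i0)
        · intro j hj
          rw [Finset.mem_image] at hj
          obtain ⟨i, _, rfl⟩ := hj
          exact hgc i
      rw [hF]
      simp only [himg, Finset.prod_singleton]
      congr 1
      have : Finset.univ.filter (fun i => g i = g i0) = Finset.univ :=
        Finset.filter_true_of_mem (fun i _ => hgc i)
      rw [this, Finset.card_univ, Fintype.card_fin]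
    rw [Finset.sum_congr rfl hconst, Finset.sum_const, nsmul_eq_mul]
    refine mul_le_mul_left ?_ (u q)
    have hinj : Set.InjOn (fun g : Fin q → ℕ => g i0) ↑(P.filter (fun g => ∀ i, g i = g i0)) := by
      intro g hg g' hg' hgg'
      rw [Finset.coe_filter, Set.mem_setOf_eq] at hg hg'
      funext i
      rw [hg.2 i, hg'.2 i]
      exact hgg'
    have hmap : ∀ g ∈ P.filter (fun g => ∀ i, g i = g i0), g i0 ∈ Finset.range k := by
      intro g hg
      rw [Finset.mem_filter] at hg
      exact Fintype.mem_piFinset.1 hg.1 i0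
    have := Finset.card_le_card_of_injOn _ hmap hinj
    exact_mod_cast Nat.cast_le.2 (this.trans (by simp))
  -- nonconstant part
  · have hbound : ∀ g ∈ P.filter (fun g => ¬ ∀ i, g i = g i0), F g ≤ B ^ 2 * (max B 1) ^ q := by
      intro g hg
      rw [Finset.mem_filter] at hg
      obtain ⟨hgP, hgnc⟩ := hg
      push_neg at hgnc
      obtain ⟨i1, hi1⟩ := hgnc
      set S := Finset.image g Finset.univ with hS
      set mfun : ℕ → ℕ := fun j => (Finset.univ.filter (fun i => g i = j)).card with hm
      have hj1 : g i0 ∈ S := Finset.mem_image_of_mem g (Finset.mem_univ i0)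
      have hj2 : g i1 ∈ S := Finset.mem_image_of_mem g (Finset.mem_univ i1)
      have hne : g i1 ≠ g i0 := hi1
      -- each multiplicity of an element of S is between 1 and q-1
      have hmle : ∀ j ∈ S, 1 ≤ mfun j ∧ mfun j ≤ q - 1 := by
        intro j hj
        constructor
        · rw [hS, Finset.mem_image] at hj
          obtain ⟨i, _, rfl⟩ := hj
          have : i ∈ Finset.univ.filter (fun i' => g i' = g i) := by simp
          exact Finset.card_pos.2 ⟨i, this⟩ 
        · -- there is an element not in the fiber of j
          have hex : ∃ i', g i' ≠ j := by
            by_cases hji : j = g i0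
            · exact ⟨i1, by rw [hji]; exact hne⟩
            · exact ⟨i0, fun h => hji (h ▸ rfl)⟩
          obtain ⟨i', hi'⟩ := hex
          have hsub : Finset.univ.filter (fun i => g i = j) ⊆ Finset.univ.erase i' := by
            intro x hx
            rw [Finset.mem_filter] at hx
            refine Finset.mem_erase.2 ⟨?_, Finset.mem_univ x⟩
            rintro rfl
            exact hi' hx.2
          have := Finset.card_le_card hsub
          rw [Finset.card_erase_of_mem (Finset.mem_univ i'), Finset.card_univ,
            Fintype.card_fin] at this
          exact this
      have hfB : ∀ j ∈ S, u (mfun j) ≤ B := fun j hj => hB _ (hmle j hj).1 (hmle j hj).2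
      -- extract two factors
      have h2 : g i1 ∈ S.erase (g i0) := Finset.mem_erase.2 ⟨hne, hj2⟩
      rw [hF]
      calc ∏ j ∈ S, u (mfun j)
          = u (mfun (g i0)) * ∏ j ∈ S.erase (g i0), u (mfun j) :=
            (Finset.mul_prod_erase S _ hj1).symm
        _ = u (mfun (g i0)) * (u (mfun (g i1)) *
            ∏ j ∈ (S.erase (g i0)).erase (g i1), u (mfun j)) := by
            congr 1
            exact (Finset.mul_prod_erase _ _ h2).symm
        _ ≤ B * (B * ∏ j ∈ (S.erase (g i0)).erase (g i1), (max B 1)) := by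
            gcongr with j hj
            · exact hfB _ hj1
            · exact hfB _ hj2
            · refine (hfB j ?_).trans (le_max_left _ _)
              exact Finset.mem_of_mem_erase (Finset.mem_of_mem_erase hj)
        _ ≤ B ^ 2 * (max B 1) ^ q := by
            rw [Finset.prod_const]
            have hcard : ((S.erase (g i0)).erase (g i1)).card ≤ q := by
              refine le_trans (Finset.card_le_card (fun x hx =>
                Finset.mem_of_mem_erase (Finset.mem_of_mem_erase hx))) ?_
              refine le_trans (Finset.card_image_le) (by simp)
            calc B * (B * (max B 1) ^ ((S.erase (g i0)).erase (g i1)).card)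
                ≤ B * (B * (max B 1) ^ q) := by
                  gcongr
                  exact le_max_right _ _
              _ = B ^ 2 * (max B 1) ^ q := by ring
    refine (Finset.sum_le_card_nsmul _ _ _ hbound).trans ?_
    rw [nsmul_eq_mul]
    refine mul_le_mul_left ?_ _
    have : (P.filter (fun g => ¬ ∀ i, g i = g i0)).card ≤ P.card := Finset.card_filter_le _ _
    refine le_trans (Nat.cast_le.2 this) ?_
    rw [hP, Fintype.card_piFinset]
    simp

lemma expand {q : ℕ} (hq : 1 ≤ q) (N' : Ω → ℕ) (C' W' : ℕ → Ω → ℝ)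
    (hN : Measurable N') (hC : ∀ i, Measurable (C' i)) (hW : ∀ i, Measurable (W' i))
    (hind : iIndepFun
      (fun j : (ℕ ⊕ ℕ) ⊕ Unit =>
        Sum.elim (Sum.elim C' W') (fun _ ω => (N' ω : ℝ)) j) ℙ) :
    ∫⁻ ω, (∑ i ∈ Finset.range (N' ω),
        ENNReal.ofReal (C' i ω) * ENNReal.ofReal (W' i ω)) ^ q ∂ℙ
    = ∑' k, ℙ {ω | N' ω = k} *
        ∑ g ∈ Fintype.piFinset (fun _ : Fin q => Finset.range k),
          ∏ j ∈ Finset.image g Finset.univ,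
            ((∫⁻ ω, (ENNReal.ofReal (C' j ω)) ^ ((Finset.univ.filter (fun i => g i = j)).card) ∂ℙ) *
             (∫⁻ ω, (ENNReal.ofReal (W' j ω)) ^ ((Finset.univ.filter (fun i => g i = j)).card) ∂ℙ)) := by
  classical
  set X : (ℕ ⊕ ℕ) ⊕ Unit → Ω → ℝ :=
    fun j => Sum.elim (Sum.elim C' W') (fun _ ω => (N' ω : ℝ)) j with hX
  have hXm : ∀ t, Measurable (X t) := by
    rintro (⟨j | j⟩ | ⟨⟩)
    · exact hC j
    · exact hW j
    · exact measurable_from_top.comp hN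
  set Y : ℕ → Ω → ℝ≥0∞ := fun i ω => ENNReal.ofReal (C' i ω) * ENNReal.ofReal (W' i ω) with hY
  have hYm : ∀ i, Measurable (Y i) :=
    fun i => (ENNReal.measurable_ofReal.comp (hC i)).mul (ENNReal.measurable_ofReal.comp (hW i))
  have hNk : ∀ k, MeasurableSet {ω | N' ω = k} := fun k => hN (measurableSet_singleton k)
  -- step 1: pointwise tsum decomposition
  have hpt : ∀ ω, (∑ i ∈ Finset.range (N' ω), Y i ω) ^ q
      = ∑' k, Set.indicator {ω' | N' ω' = k}
          (fun ω' => (∑ i ∈ Finset.range k, Y i ω') ^ q) ω := by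
    intro ω
    rw [tsum_eq_single (N' ω) ?_]
    · rw [Set.indicator_of_mem (show ω ∈ {ω' | N' ω' = N' ω} from rfl)]
    · intro k hk
      refine Set.indicator_of_notMem ?_ _
      intro h
      exact hk (Eq.symm h)
  calc ∫⁻ ω, (∑ i ∈ Finset.range (N' ω), Y i ω) ^ q ∂ℙ
      = ∫⁻ ω, ∑' k, Set.indicator {ω' | N' ω' = k}
          (fun ω' => (∑ i ∈ Finset.range k, Y i ω') ^ q) ω ∂ℙ := lintegral_congr hpt
    _ = ∑' k, ∫⁻ ω, Set.indicator {ω' | N' ω' = k}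
          (fun ω' => (∑ i ∈ Finset.range k, Y i ω') ^ q) ω ∂ℙ := by
        refine lintegral_tsum (fun k => Measurable.aemeasurable ?_)
        exact Measurable.indicator ((Finset.measurable_sum _ (fun i _ => hYm i)).pow_const q) (hNk k)
    _ = ∑' k, ℙ {ω | N' ω = k} *
        ∑ g ∈ Fintype.piFinset (fun _ : Fin q => Finset.range k),
          ∏ j ∈ Finset.image g Finset.univ,
            ((∫⁻ ω, (ENNReal.ofReal (C' j ω)) ^ ((Finset.univ.filter (fun i => g i = j)).card) ∂ℙ) *
             (∫⁻ ω, (ENNReal.ofReal (W' j ω)) ^ ((Finset.univ.filter (fun i => g i = j)).card) ∂ℙ)) := by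
        refine tsum_congr (fun k => ?_)
        -- indicator as 0/1 function
        set I : Ω → ℝ≥0∞ := fun ω => if N' ω = k then 1 else 0 with hI
        have hIm : Measurable I := Measurable.ite (hNk k) measurable_const measurable_const
        have hind_eq : ∀ ω, Set.indicator {ω' | N' ω' = k}
            (fun ω' => (∑ i ∈ Finset.range k, Y i ω') ^ q) ω
            = I ω * (∑ i ∈ Finset.range k, Y i ω) ^ q := by
          intro ω
          rw [Set.indicator_apply, hI]
          by_cases h : N' ω = k
          · simp [h]
          · simp [h, Set.mem_setOf_eq]
        rw [lintegral_congr hind_eq]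
        -- expand the power
        have hexpand : ∀ ω, (∑ i ∈ Finset.range k, Y i ω) ^ q
            = ∑ g ∈ Fintype.piFinset (fun _ : Fin q => Finset.range k),
                ∏ i : Fin q, Y (g i) ω := by
          intro ω
          exact Finset.sum_pow' (Finset.range k) (fun i => Y i ω) q
        have : ∀ ω, I ω * (∑ i ∈ Finset.range k, Y i ω) ^ q
            = ∑ g ∈ Fintype.piFinset (fun _ : Fin q => Finset.range k),
                I ω * ∏ i : Fin q, Y (g i) ω := by
          intro ω
          rw [hexpand ω, Finset.mul_sum]
        rw [lintegral_congr this]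
        rw [lintegral_finset_sum _ (fun g _ =>
          (hIm.mul (Finset.measurable_prod _ (fun i _ => hYm (g i))) :
            Measurable fun ω => I ω * ∏ i : Fin q, Y (g i) ω))]
        rw [Finset.mul_sum]
        refine Finset.sum_congr rfl (fun g _ => ?_)
        -- now the per-g factorization
        set S : Finset ℕ := Finset.image g Finset.univ with hS
        set mf : ℕ → ℕ := fun j => (Finset.univ.filter (fun i => g i = j)).card with hmf
        set φ : (ℕ ⊕ ℕ) ⊕ Unit → ℝ → ℝ≥0∞ := fun t =>
          Sum.elim (Sum.elim (fun j x => ENNReal.ofReal x ^ mf j)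
            (fun j x => ENNReal.ofReal x ^ mf j))
            (fun _ x => if x = (k : ℝ) then 1 else 0) t with hφ
        have hφm : ∀ t, Measurable (φ t) := by
          rintro (⟨j | j⟩ | ⟨⟩)
          · exact ENNReal.measurable_ofReal.pow_const _
          · exact ENNReal.measurable_ofReal.pow_const _
          · exact Measurable.ite (measurableSet_eq) measurable_const measurable_const
        set TT : Finset ((ℕ ⊕ ℕ) ⊕ Unit) :=
          insert (Sum.inr ()) ((S.image (Sum.inl ∘ Sum.inl)) ∪ (S.image (Sum.inl ∘ Sum.inr)))
          with hTT
        have hnotmem : (Sum.inr () : (ℕ ⊕ ℕ) ⊕ Unit)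
            ∉ (S.image (Sum.inl ∘ Sum.inl)) ∪ (S.image (Sum.inl ∘ Sum.inr)) := by simp
        have hdisj : Disjoint (S.image (Sum.inl ∘ Sum.inl) : Finset ((ℕ ⊕ ℕ) ⊕ Unit))
            (S.image (Sum.inl ∘ Sum.inr)) := by
          rw [Finset.disjoint_left]
          rintro t ht1 ht2
          rw [Finset.mem_image] at ht1 ht2
          obtain ⟨a, _, rfl⟩ := ht1
          obtain ⟨b, _, hb⟩ := ht2
          simp at hb
        have hinj1 : Set.InjOn (Sum.inl ∘ Sum.inl : ℕ → (ℕ ⊕ ℕ) ⊕ Unit) ↑S := by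
          intro a _ b _ h; simpa using h
        have hinj2 : Set.InjOn (Sum.inl ∘ Sum.inr : ℕ → (ℕ ⊕ ℕ) ⊕ Unit) ↑S := by
          intro a _ b _ h; simpa using h
        -- pointwise product identity
        have hprod : ∀ ω, I ω * ∏ i : Fin q, Y (g i) ω = ∏ t ∈ TT, φ t (X t ω) := by
          intro ω
          have h1 : ∏ i : Fin q, Y (g i) ω = ∏ j ∈ S, (Y j ω) ^ mf j :=
            Finset.prod_comp (fun j => Y j ω) g
          have h2 : ∏ j ∈ S, (Y j ω) ^ mf j
              = (∏ j ∈ S, (ENNReal.ofReal (C' j ω)) ^ mf j) *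
                (∏ j ∈ S, (ENNReal.ofReal (W' j ω)) ^ mf j) := by
            rw [← Finset.prod_mul_distrib]
            exact Finset.prod_congr rfl (fun j _ => mul_pow _ _ _)
          have hIphi : I ω = φ (Sum.inr ()) (X (Sum.inr ()) ω) := by
            rw [hI, hφ]
            simp only [Sum.elim_inr]
            by_cases h : N' ω = k
            · simp [hX, h]
            · have : (N' ω : ℝ) ≠ (k : ℝ) := fun hc => h (Nat.cast_injective hc)
              simp [hX, h, this]
          rw [hTT, Finset.prod_insert hnotmem, Finset.prod_union hdisj,
            Finset.prod_image (fun a ha b hb h => hinj1 ha hb h),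
            Finset.prod_image (fun a ha b hb h => hinj2 ha hb h),
            h1, h2, ← hIphi]
          rfl
        rw [lintegral_congr hprod]
        rw [lintegral_finset_prod_of_iIndepFun hind hXm φ hφm TT]
        rw [hTT, Finset.prod_insert hnotmem, Finset.prod_union hdisj,
          Finset.prod_image (fun a ha b hb h => hinj1 ha hb h),
          Finset.prod_image (fun a ha b hb h => hinj2 ha hb h)]
        have hPN : ∫⁻ ω, φ (Sum.inr ()) (X (Sum.inr ()) ω) ∂ℙ = ℙ {ω | N' ω = k} := by
          have : ∀ ω, φ (Sum.inr ()) (X (Sum.inr ()) ω)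
              = Set.indicator {ω' | N' ω' = k} (fun _ => 1) ω := by
            intro ω
            rw [Set.indicator_apply]
            by_cases h : N' ω = k
            · simp [hφ, hX, h]
            · have : (N' ω : ℝ) ≠ (k : ℝ) := fun hc => h (Nat.cast_injective hc)
              simp [hφ, hX, h, this]
          rw [lintegral_congr this]
          exact lintegral_indicator_one (hNk k)
        rw [hPN]
        congr 1
        rw [← Finset.prod_mul_distrib]
        exact Finset.prod_congr rfl (fun j _ => rfl)

lemma ae_nonneg_of_map_eq {f g : Ω → ℝ} (hf : Measurable f) (hg : Measurable g)
    (hmap : Measure.map f ℙ = Measure.map g ℙ) (h : ∀ ω, 0 ≤ g ω) :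
    ∀ᵐ ω ∂(ℙ : Measure Ω), 0 ≤ f ω := by
  have h1 : ℙ (f ⁻¹' (Set.Iio 0)) = ℙ (g ⁻¹' (Set.Iio 0)) := by
    rw [← Measure.map_apply hf measurableSet_Iio, hmap, Measure.map_apply hg measurableSet_Iio]
  have h2 : g ⁻¹' (Set.Iio 0) = ∅ := by
    ext ω; simp only [Set.mem_preimage, Set.mem_Iio, Set.mem_empty_iff_false, iff_false, not_lt]
    exact h ω
  rw [ae_iff]
  have : {ω | ¬ 0 ≤ f ω} = f ⁻¹' (Set.Iio 0) := by
    ext ω; simp [not_le]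
  rw [this, h1, h2]
  simp

lemma lintegral_ofReal_pow_map_eq {f g : Ω → ℝ} (hf : Measurable f) (hg : Measurable g)
    (hmap : Measure.map f ℙ = Measure.map g ℙ) (m : ℕ) :
    ∫⁻ ω, (ENNReal.ofReal (f ω)) ^ m ∂ℙ = ∫⁻ ω, (ENNReal.ofReal (g ω)) ^ m ∂ℙ := by
  have hφ : Measurable (fun x : ℝ => (ENNReal.ofReal x) ^ m) :=
    ENNReal.measurable_ofReal.pow_const m
  rw [← lintegral_map hφ hf, ← lintegral_map hφ hg, hmap]

lemma meas_eq_of_map_eq {f g : Ω → ℕ} (hf : Measurable f) (hg : Measurable g)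
    (hmap : Measure.map f ℙ = Measure.map g ℙ) (k : ℕ) :
    ℙ {ω | f ω = k} = ℙ {ω | g ω = k} := by
  have h1 : {ω | f ω = k} = f ⁻¹' {k} := rfl
  have h2 : {ω | g ω = k} = g ⁻¹' {k} := rfl
  rw [h1, h2, ← Measure.map_apply hf (measurableSet_singleton k), hmap,
    Measure.map_apply hg (measurableSet_singleton k)]

lemma tsum_pow_meas_eq {N : Ω → ℕ} (hN : Measurable N) (m : ℕ) :
    ∑' k, ℙ {ω | N ω = k} * ((k : ℝ≥0∞)) ^ m
      = ∫⁻ ω, (ENNReal.ofReal ((N ω : ℝ))) ^ m ∂ℙ := by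
  have hφ : Measurable (fun k : ℕ => ((k : ℝ≥0∞)) ^ m) := measurable_from_top
  have h1 : ∫⁻ ω, (ENNReal.ofReal ((N ω : ℝ))) ^ m ∂ℙ
      = ∫⁻ ω, ((N ω : ℝ≥0∞)) ^ m ∂ℙ := by
    refine lintegral_congr (fun ω => ?_)
    rw [ENNReal.ofReal_natCast]
  rw [h1, ← lintegral_map hφ hN, lintegral_countable']
  refine tsum_congr (fun k => ?_)
  rw [Measure.map_apply hN (measurableSet_singleton k), mul_comm]
  rfl

lemma pow_le_one_add_pow {x : ℝ≥0∞} {m p : ℕ} (hmp : m ≤ p) : x ^ m ≤ 1 + x ^ p := by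
  rcases le_total x 1 with hx | hx
  · calc x ^ m ≤ 1 ^ m := pow_le_pow_left' hx m
      _ = 1 := one_pow m
      _ ≤ 1 + x ^ p := le_self_add
  · calc x ^ m ≤ x ^ p := pow_le_pow_right₀ hx hmp
      _ ≤ 1 + x ^ p := le_add_self

lemma lhs_transport {q : ℕ} {Wn1 : Ω → ℝ} (hWn1 : Measurable Wn1)
    {N' : Ω → ℕ} {C' W' : ℕ → Ω → ℝ} (hN' : Measurable N')
    (hC' : ∀ i, Measurable (C' i)) (hW' : ∀ i, Measurable (W' i))
    (hC0 : ∀ i, ∀ᵐ ω ∂(ℙ : Measure Ω), 0 ≤ C' i ω)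
    (hW0 : ∀ i, ∀ᵐ ω ∂(ℙ : Measure Ω), 0 ≤ W' i ω)
    (hmap : Measure.map Wn1 ℙ
      = Measure.map (fun ω => ∑ i ∈ Finset.range (N' ω), C' i ω * W' i ω) ℙ) :
    ∫⁻ ω, (ENNReal.ofReal (Wn1 ω)) ^ q ∂ℙ
      = ∫⁻ ω, (∑ i ∈ Finset.range (N' ω),
          ENNReal.ofReal (C' i ω) * ENNReal.ofReal (W' i ω)) ^ q ∂ℙ := by
  have hφ : Measurable (fun x : ℝ => (ENNReal.ofReal x) ^ q) :=
    ENNReal.measurable_ofReal.pow_const q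
  have hSm : Measurable (fun ω => ∑ i ∈ Finset.range (N' ω), C' i ω * W' i ω) := by
    have huncur : Measurable (fun pr : Ω × ℕ => ∑ i ∈ Finset.range pr.2, C' i pr.1 * W' i pr.1) := by
      refine measurable_from_prod_countable_left (fun k => ?_)
      show Measurable fun x : Ω => ∑ i ∈ Finset.range k, C' i x * W' i x
      exact Finset.measurable_sum _ (fun i _ => (hC' i).mul (hW' i))
    exact huncur.comp (measurable_id.prodMk hN')
  rw [← lintegral_map hφ hWn1, hmap, lintegral_map hφ hSm]
  refine lintegral_congr_ae ?_
  filter_upwards [ae_all_iff.2 hC0, ae_all_iff.2 hW0] with ω h1 h2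
  congr 1
  rw [ENNReal.ofReal_sum_of_nonneg (fun i _ => mul_nonneg (h1 i) (h2 i))]
  exact Finset.sum_congr rfl (fun i _ => ENNReal.ofReal_mul (h1 i))

end AuxLemmas


theorem wbp_integer_moment_bound
    {Ω : Type*} [MeasureSpace Ω] [IsProbabilityMeasure (ℙ : Measure Ω)]
    (N : Ω → ℕ) (C : Ω → ℝ) (Q : Ω → ℝ) (W : ℕ → Ω → ℝ)
    (hwbp : IsWBP N C Q W)
    (p : ℕ) (hp : 2 ≤ p)
    (hQp : Integrable (fun ω => Q ω ^ p) ℙ)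
    (hNp : Integrable (fun ω => (N ω : ℝ) ^ p) ℙ)
    (hC1 : Integrable C ℙ) (hCp : Integrable (fun ω => C ω ^ p) ℙ)
    (hsub : (∫ ω, (N ω : ℝ) ∂ℙ) * max (∫ ω, C ω ^ p ∂ℙ) (∫ ω, C ω ∂ℙ) < 1) :
    ∃ K : ℝ, 0 < K ∧ ∀ n : ℕ,
      ∫⁻ ω, ENNReal.ofReal (W n ω ^ p) ∂ℙ ≤
        ENNReal.ofReal
          (K * ((∫ ω, (N ω : ℝ) ∂ℙ) * max (∫ ω, C ω ∂ℙ) (∫ ω, C ω ^ p ∂ℙ)) ^ n) := by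
  classical
  obtain ⟨hNm, hCm, hQm, hWm, hC0, hQ0, hW0, hmapW0, hstep⟩ := hwbp
  set cc : ℕ → ℝ≥0∞ := fun m => ∫⁻ ω, (ENNReal.ofReal (C ω)) ^ m ∂ℙ with hcc
  set aa : ℕ → ℕ → ℝ≥0∞ := fun m n => ∫⁻ ω, (ENNReal.ofReal (W n ω)) ^ m ∂ℙ with haa
  set pN : ℕ → ℝ≥0∞ := fun k => ℙ {ω | N ω = k} with hpN
  set nb : ℕ → ℝ≥0∞ := fun m => ∑' k, pN k * ((k : ℝ≥0∞)) ^ m with hnb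
  set chat : ℝ≥0∞ := max (cc 1) (cc p) with hchat
  set rho : ℝ≥0∞ := nb 1 * chat with hrho
  -- real-number helper
  have hreal_le : ∀ x : ℝ, 0 ≤ x → x ≤ 1 + x ^ p := by
    intro x hx
    rcases le_total x 1 with h | h
    · have : (0:ℝ) ≤ x ^ p := by positivity
      linarith
    · calc x = x ^ 1 := (pow_one x).symm
        _ ≤ x ^ p := pow_le_pow_right₀ h (by omega)
        _ ≤ 1 + x ^ p := by linarith
  -- integrability of N
  have hNint : Integrable (fun ω => (N ω : ℝ)) ℙ := by
    refine Integrable.mono ((integrable_const (1:ℝ)).add hNp)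
      ((measurable_from_top.comp hNm : Measurable fun ω => (N ω : ℝ))).aestronglyMeasurable
      (Filter.Eventually.of_forall (fun ω => ?_))
    have h0 : (0:ℝ) ≤ (N ω : ℝ) := Nat.cast_nonneg _
    have h1 : (0:ℝ) ≤ 1 + (N ω : ℝ) ^ p := by positivity
    show ‖(N ω : ℝ)‖ ≤ ‖1 + (N ω : ℝ) ^ p‖
    rw [Real.norm_eq_abs, Real.norm_eq_abs, abs_of_nonneg h0, abs_of_nonneg h1]
    exact hreal_le _ h0
  -- nb identities
  have hnb_eq : ∀ m, nb m = ∫⁻ ω, (ENNReal.ofReal ((N ω : ℝ))) ^ m ∂ℙ :=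
    fun m => tsum_pow_meas_eq hNm m
  have hnb1 : nb 1 = ENNReal.ofReal (∫ ω, (N ω : ℝ) ∂ℙ) := by
    rw [hnb_eq 1, ofReal_integral_eq_lintegral_ofReal hNint
      (Filter.Eventually.of_forall (fun ω => Nat.cast_nonneg _))]
    simp
  have hnbp : nb p = ENNReal.ofReal (∫ ω, (N ω : ℝ) ^ p ∂ℙ) := by
    rw [hnb_eq p, ofReal_integral_eq_lintegral_ofReal hNp
      (Filter.Eventually.of_forall (fun ω => by positivity))]
    refine lintegral_congr (fun ω => ?_)
    rw [ENNReal.ofReal_pow (Nat.cast_nonneg _)]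
  have hnb0 : nb 0 = 1 := by
    rw [hnb_eq 0]
    simp
  have hnb_fin : ∀ m, m ≤ p → nb m ≠ ∞ := by
    intro m hm
    have hle : nb m ≤ nb 0 + nb p := by
      rw [hnb_eq m, hnb_eq 0, hnb_eq p, ← lintegral_add_left (by
        exact (ENNReal.measurable_ofReal.comp (measurable_from_top.comp hNm)).pow_const 0)]
      exact lintegral_mono (fun ω => by
        simpa using pow_le_one_add_pow (x := ENNReal.ofReal ((N ω : ℝ))) hm)
    refine ne_top_of_le_ne_top ?_ hle
    rw [hnb0, hnbp]
    simp [ENNReal.add_ne_top]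
  -- cc identities
  have hcc1 : cc 1 = ENNReal.ofReal (∫ ω, C ω ∂ℙ) := by
    rw [hcc, ofReal_integral_eq_lintegral_ofReal hC1 (Filter.Eventually.of_forall hC0)]
    simp
  have hccp : cc p = ENNReal.ofReal (∫ ω, C ω ^ p ∂ℙ) := by
    rw [hcc, ofReal_integral_eq_lintegral_ofReal hCp
      (Filter.Eventually.of_forall (fun ω => by have := hC0 ω; positivity))]
    exact lintegral_congr (fun ω => (ENNReal.ofReal_pow (hC0 ω) p).symm)
  have hchat_fin : chat ≠ ∞ := by
    rw [hchat, hcc1, hccp]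
    simp [max_eq_iff, ENNReal.ofReal_ne_top]
  have hccle : ∀ m, 1 ≤ m → m ≤ p → cc m ≤ chat := by
    intro m h1 h2
    have := lintegral_pow_le_max (f := fun ω => ENNReal.ofReal (C ω))
      (ENNReal.measurable_ofReal.comp hCm) h1 h2
    rw [hchat]
    refine this.trans (le_of_eq ?_)
    congr 1
    simp [hcc]
  -- rho identities
  have hrho_eq : rho = ENNReal.ofReal ((∫ ω, (N ω : ℝ) ∂ℙ) *
      max (∫ ω, C ω ∂ℙ) (∫ ω, C ω ^ p ∂ℙ)) := by
    rw [hrho, hnb1, hchat, hcc1, hccp]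
    rw [ENNReal.ofReal_mul (integral_nonneg (fun ω => Nat.cast_nonneg _))]
    congr 1
    rcases le_total (∫ ω, C ω ∂ℙ) (∫ ω, C ω ^ p ∂ℙ) with h | h
    · rw [max_eq_right h, max_eq_right (ENNReal.ofReal_le_ofReal h)]
    · rw [max_eq_left h, max_eq_left (ENNReal.ofReal_le_ofReal h)]
  have hrho_lt : rho < 1 := by
    rw [hrho_eq]
    rw [ENNReal.ofReal_lt_one]
    rwa [max_comm] at hsub
  have hrho_le1 : rho ≤ 1 := hrho_lt.le
  -- bound on the zeroth generation
  set A0 : ℝ≥0∞ := 1 + ENNReal.ofReal (∫ ω, Q ω ^ p ∂ℙ) with hA0def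
  have hA0fin : A0 ≠ ∞ := by
    rw [hA0def]
    simp [ENNReal.add_ne_top]
  have hA0 : ∀ m, 1 ≤ m → m ≤ p → aa m 0 ≤ A0 := by
    intro m h1 h2
    have e1 : aa m 0 = ∫⁻ ω, (ENNReal.ofReal (Q ω)) ^ m ∂ℙ :=
      lintegral_ofReal_pow_map_eq (hWm 0) hQm hmapW0 m
    have e2 : ∫⁻ ω, (ENNReal.ofReal (Q ω)) ^ p ∂ℙ = ENNReal.ofReal (∫ ω, Q ω ^ p ∂ℙ) := by
      rw [ofReal_integral_eq_lintegral_ofReal hQp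
        (Filter.Eventually.of_forall (fun ω => by have := hQ0 ω; positivity))]
      exact lintegral_congr (fun ω => (ENNReal.ofReal_pow (hQ0 ω) p).symm)
    calc aa m 0 = ∫⁻ ω, (ENNReal.ofReal (Q ω)) ^ m ∂ℙ := e1
      _ ≤ ∫⁻ ω, (1 + (ENNReal.ofReal (Q ω)) ^ p) ∂ℙ :=
          lintegral_mono (fun ω => pow_le_one_add_pow h2)
      _ = 1 + ∫⁻ ω, (ENNReal.ofReal (Q ω)) ^ p ∂ℙ := by
          rw [lintegral_add_left measurable_const]
          simp
      _ = A0 := by rw [e2, hA0def]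
  -- the main induction on the moment order
  have claim : ∀ q : ℕ, q ≤ p →
      ∃ K : ℝ≥0∞, K ≠ ∞ ∧ ∀ m, 1 ≤ m → m ≤ q → ∀ n, aa m n ≤ K * rho ^ n := by
    intro q
    induction q with
    | zero =>
      exact fun _ => ⟨1, ENNReal.one_ne_top,
        fun m hm hm0 => absurd (hm.trans hm0) (by omega)⟩
    | succ q ih =>
      intro hqp
      obtain ⟨K', hK'fin, hK'⟩ := ih (by omega)
      set γ : ℝ≥0∞ := max (chat * K') 1 with hγdef
      set D : ℝ≥0∞ := nb (q + 1) * ((chat * K') ^ 2 * γ ^ (q + 1)) with hDdef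
      have hrec : ∀ n, aa (q + 1) (n + 1) ≤ rho * aa (q + 1) n + D * rho ^ (2 * n) := by
        intro n
        obtain ⟨N', C', W', hN', hC', hW', hmapN, hmapC, hmapW, hind, hmapW1⟩ := hstep n
        have hC'0 : ∀ i, ∀ᵐ ω ∂(ℙ : Measure Ω), 0 ≤ C' i ω :=
          fun i => ae_nonneg_of_map_eq (hC' i) hCm (hmapC i) hC0
        have hW'0 : ∀ i, ∀ᵐ ω ∂(ℙ : Measure Ω), 0 ≤ W' i ω :=
          fun i => ae_nonneg_of_map_eq (hW' i) (hWm n) (hmapW i) (hW0 n)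
        have ha_eq : aa (q + 1) (n + 1)
            = ∫⁻ ω, (∑ i ∈ Finset.range (N' ω),
                ENNReal.ofReal (C' i ω) * ENNReal.ofReal (W' i ω)) ^ (q + 1) ∂ℙ :=
          lhs_transport (hWm (n + 1)) hN' hC' hW' hC'0 hW'0 hmapW1
        set u : ℕ → ℝ≥0∞ := fun m => cc m * aa m n with hu
        have hexp : aa (q + 1) (n + 1) = ∑' k, pN k *
            ∑ g ∈ Fintype.piFinset (fun _ : Fin (q + 1) => Finset.range k),
              ∏ j ∈ Finset.image g Finset.univ,
                u ((Finset.univ.filter (fun i => g i = j)).card) := by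
          rw [ha_eq, expand (by omega) N' C' W' hN' hC' hW' hind]
          refine tsum_congr (fun k => ?_)
          congr 1
          · rw [hpN]
            exact meas_eq_of_map_eq hN' hNm hmapN k
          · refine Finset.sum_congr rfl (fun g _ => Finset.prod_congr rfl (fun j _ => ?_))
            rw [hu, hcc, haa]
            congr 1
            · exact lintegral_ofReal_pow_map_eq (hC' j) hCm (hmapC j) _
            · exact lintegral_ofReal_pow_map_eq (hW' j) (hWm n) (hmapW j) _
        set B : ℝ≥0∞ := (chat * K') * rho ^ n with hBdef
        have hB : ∀ m, 1 ≤ m → m ≤ (q + 1) - 1 → u m ≤ B := by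
          intro m h1 h2
          have hm2 : m ≤ q := by omega
          rw [hu, hBdef]
          have hc : cc m ≤ chat := hccle m h1 (by omega)
          have ha : aa m n ≤ K' * rho ^ n := hK' m h1 hm2 n
          calc cc m * aa m n ≤ chat * (K' * rho ^ n) := mul_le_mul' hc ha
            _ = (chat * K') * rho ^ n := by ring
        have hcomb : ∀ k : ℕ,
            ∑ g ∈ Fintype.piFinset (fun _ : Fin (q + 1) => Finset.range k),
              ∏ j ∈ Finset.image g Finset.univ,
                u ((Finset.univ.filter (fun i => g i = j)).card)
            ≤ (k : ℝ≥0∞) * u (q + 1) + (k : ℝ≥0∞) ^ (q + 1) * (B ^ 2 * (max B 1) ^ (q + 1)) :=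
          fun k => combine (by omega) u B hB
        have htsum : aa (q + 1) (n + 1) ≤
            nb 1 * u (q + 1) + nb (q + 1) * (B ^ 2 * (max B 1) ^ (q + 1)) := by
          rw [hexp]
          refine le_trans (ENNReal.tsum_le_tsum (fun k => mul_le_mul_right (hcomb k) (pN k))) ?_
          have hre : ∀ k : ℕ, pN k * ((k : ℝ≥0∞) * u (q + 1)
              + (k : ℝ≥0∞) ^ (q + 1) * (B ^ 2 * (max B 1) ^ (q + 1)))
              = (pN k * (k : ℝ≥0∞) ^ 1) * u (q + 1)
              + (pN k * (k : ℝ≥0∞) ^ (q + 1)) * (B ^ 2 * (max B 1) ^ (q + 1)) := by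
            intro k
            ring
          rw [tsum_congr hre, ENNReal.tsum_add, ENNReal.tsum_mul_right, ENNReal.tsum_mul_right]
        refine htsum.trans (add_le_add ?_ ?_)
        · have h1 : u (q + 1) ≤ chat * aa (q + 1) n := by
            rw [hu]
            exact mul_le_mul_left (hccle (q + 1) (by omega) hqp) _
          calc nb 1 * u (q + 1) ≤ nb 1 * (chat * aa (q + 1) n) := mul_le_mul_right h1 _
            _ = rho * aa (q + 1) n := by rw [hrho]; ring
        · have hBle : B ≤ chat * K' := by
            rw [hBdef]
            calc (chat * K') * rho ^ n ≤ (chat * K') * 1 :=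
              mul_le_mul_right (pow_le_one' hrho_le1 n) _
              _ = chat * K' := mul_one _
          have hmaxle : max B 1 ≤ γ := max_le_max_right 1 hBle
          have hB2 : B ^ 2 = (chat * K') ^ 2 * rho ^ (2 * n) := by
            rw [hBdef, mul_pow, ← pow_mul, Nat.mul_comm]
          calc nb (q + 1) * (B ^ 2 * (max B 1) ^ (q + 1))
              ≤ nb (q + 1) * (((chat * K') ^ 2 * rho ^ (2 * n)) * γ ^ (q + 1)) := by
                refine mul_le_mul_right (mul_le_mul' (le_of_eq hB2) (pow_le_pow_left' hmaxle _)) _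
            _ = D * rho ^ (2 * n) := by rw [hDdef]; ring
      have hD0 : rho = 0 → D = 0 := by
        intro h0
        rw [hrho] at h0
        rcases mul_eq_zero.1 h0 with h | h
        · have hnbq : nb (q + 1) = 0 := by
            rw [hnb, ENNReal.tsum_eq_zero]
            intro k
            rcases Nat.eq_zero_or_pos k with rfl | hk
            · simp
            · have := (ENNReal.tsum_eq_zero.1 h) k
              rcases mul_eq_zero.1 this with h' | h'
              · rw [h', zero_mul]
              · exfalso
                have : (k : ℝ≥0∞) ≠ 0 := Nat.cast_ne_zero.2 (by omega)
                simp [this] at h'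
          rw [hDdef, hnbq, zero_mul]
        · rw [hDdef, h]
          simp
      have hDfin : D ≠ ∞ := by
        rw [hDdef]
        refine ENNReal.mul_ne_top (hnb_fin (q + 1) hqp) (ENNReal.mul_ne_top ?_ ?_)
        · exact ENNReal.pow_ne_top (ENNReal.mul_ne_top hchat_fin hK'fin)
        · exact ENNReal.pow_ne_top (by
            rw [hγdef]
            simp [max_eq_iff, ENNReal.mul_ne_top, hchat_fin, hK'fin, ENNReal.one_ne_top])
      obtain ⟨K2, hK2fin, hK2⟩ := geom_rec hrho_lt (hA0 (q + 1) (by omega) hqp)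
        hA0fin hDfin hD0 hrec
      refine ⟨max K' K2, ?_, ?_⟩
      · simp [max_eq_iff, hK'fin, hK2fin]
      · intro m h1 h2 n
        rcases Nat.lt_or_ge m (q + 1) with hlt | hge
        · exact (hK' m h1 (by omega) n).trans (mul_le_mul_left (le_max_left _ _) _)
        · have : m = q + 1 := by omega
          subst this
          exact (hK2 n).trans (mul_le_mul_left (le_max_right _ _) _)
  -- conclusion
  obtain ⟨K, hKfin, hK⟩ := claim p le_rfl
  refine ⟨K.toReal + 1, by positivity, fun n => ?_⟩
  have h1 : ∫⁻ ω, ENNReal.ofReal (W n ω ^ p) ∂ℙ = aa p n := by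
    rw [haa]
    exact lintegral_congr (fun ω => by rw [ENNReal.ofReal_pow (hW0 n ω)])
  rw [h1]
  refine (hK p (by omega) le_rfl n).trans ?_
  have hρ0 : 0 ≤ (∫ ω, (N ω : ℝ) ∂ℙ) * max (∫ ω, C ω ∂ℙ) (∫ ω, C ω ^ p ∂ℙ) := by
    refine mul_nonneg (integral_nonneg (fun ω => Nat.cast_nonneg _)) ?_
    exact le_trans (integral_nonneg hC0) (le_max_left _ _)
  rw [ENNReal.ofReal_mul (by positivity), ENNReal.ofReal_pow hρ0, ← hrho_eq]
  refine mul_le_mul_left ?_ _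
  calc K = ENNReal.ofReal K.toReal := (ENNReal.ofReal_toReal hKfin).symm
    _ ≤ ENNReal.ofReal (K.toReal + 1) := ENNReal.ofReal_le_ofReal (by linarith)
end

section
/- Let $Y_1, Y_2, \dots$ be nonnegative iid random variables with common law that of $Y$ where $E[Y^\beta] < \infty$ for some $0 < \beta < 1$. Then for all integers $1 \leq k \leq x^\beta / E[Y^\beta]$ and all $x \geq e^{(Ke)^{1/(1-\beta)}}$, $P\left( \sum_{i=1}^k Y_i > x, \ \max_{1 \leq i \leq k} Y_i \leq x/\log x \right) \leq \exp\left( -(1-\beta)(\log x)(\log\log x)\left( 1 - \frac{\log(eK)}{(1-\beta)\log\log x} \right) \right)$, where $K = K(\beta) = 2^\beta\left(1 + (2e+1)\sup_{t \geq 1/2} t^\beta e^{-t}\right)$ is a constant not depending on $k$ or the distribution of $Y$. -/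
open MeasureTheory ProbabilityTheory Filter Set Finset Real

set_option maxHeartbeats 1000000 in
theorem truncated_chernoff_bound
    {Ω : Type*} [MeasureSpace Ω] [IsProbabilityMeasure (ℙ : Measure Ω)]
    (Y : ℕ → Ω → ℝ) (hYmeas : ∀ i, Measurable (Y i)) (hYnn : ∀ i ω, 0 ≤ Y i ω)
    (hYindep : iIndepFun Y ℙ)
    (hYid : ∀ i, Measure.map (Y i) ℙ = Measure.map (Y 0) ℙ)
    (β : ℝ) (hβ0 : 0 < β) (hβ1 : β < 1)
    (hYβ : Integrable (fun ω => Y 0 ω ^ β) ℙ)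
    (K : ℝ)
    (hK : K = 2 ^ β * (1 + (2 * Real.exp 1 + 1) *
      ⨆ t ∈ Set.Ici (1/2 : ℝ), t ^ β * Real.exp (-t))) :
    ∀ (k : ℕ) (x : ℝ), 1 ≤ k →
      (k : ℝ) ≤ x ^ β / ∫ ω, Y 0 ω ^ β ∂ℙ →
      Real.exp ((K * Real.exp 1) ^ (1 / (1 - β))) ≤ x →
      (ℙ {ω | x < ∑ i ∈ Finset.range k, Y i ω ∧
          ∀ i ∈ Finset.range k, Y i ω ≤ x / Real.log x}).toReal ≤
        Real.exp (-((1 - β) * Real.log x * Real.log (Real.log x) *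
          (1 - Real.log (Real.exp 1 * K) / ((1 - β) * Real.log (Real.log x))))) := by
  intro k x hk hkx hx
  have hβ' : (0:ℝ) < 1 - β := by linarith
  -- K ≥ 1
  have hsup : (0:ℝ) ≤ ⨆ t ∈ Set.Ici (1/2 : ℝ), t ^ β * Real.exp (-t) := by
    refine Real.iSup_nonneg fun t => Real.iSup_nonneg fun ht => ?_
    have ht0 : (0:ℝ) ≤ t := le_trans (by norm_num) ht
    positivity
  have h2β : (1:ℝ) ≤ 2 ^ β := by
    have := Real.rpow_le_rpow_of_exponent_le (one_le_two (α := ℝ)) hβ0.le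
    simpa using this
  have hK1 : (1:ℝ) ≤ K := by
    have h1 : (0:ℝ) ≤ (2 * Real.exp 1 + 1) *
        ⨆ t ∈ Set.Ici (1/2 : ℝ), t ^ β * Real.exp (-t) := by
      have h2 : (0:ℝ) < Real.exp 1 := Real.exp_pos 1
      nlinarith
    rw [hK]; nlinarith
  have hK0 : (0:ℝ) < K := lt_of_lt_of_le one_pos hK1
  -- x is large : log x ≥ e, log log x ≥ 1
  have hx0 : (0:ℝ) < x := lt_of_lt_of_le (Real.exp_pos _) hx
  have hKe1 : (1:ℝ) ≤ K * Real.exp 1 := by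
    have h1 : (1:ℝ) ≤ Real.exp 1 := by
      have := Real.add_one_le_exp (1:ℝ); linarith
    nlinarith
  have hEKe : Real.exp 1 ≤ (K * Real.exp 1) ^ (1 / (1 - β)) := by
    have h1 : Real.exp 1 ≤ K * Real.exp 1 :=
      le_mul_of_one_le_left (Real.exp_pos 1).le hK1
    calc Real.exp 1 ≤ K * Real.exp 1 := h1
      _ = (K * Real.exp 1) ^ (1:ℝ) := (Real.rpow_one _).symm
      _ ≤ (K * Real.exp 1) ^ (1 / (1 - β)) := by
          refine Real.rpow_le_rpow_of_exponent_le hKe1 ?_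
          rw [le_div_iff₀ hβ']; nlinarith
  set L := Real.log x with hLdef
  have hLe : Real.exp 1 ≤ L := by
    have h : (K * Real.exp 1) ^ (1 / (1 - β)) ≤ L := by
      rw [hLdef, ← Real.log_exp ((K * Real.exp 1) ^ (1 / (1 - β)))]
      exact Real.log_le_log (Real.exp_pos _) hx
    linarith
  have hL1 : (1:ℝ) < L :=
    lt_of_lt_of_le (by have := Real.add_one_le_exp (1:ℝ); linarith) hLe
  have hL0 : (0:ℝ) < L := lt_trans one_pos hL1
  set ℓ := Real.log L with hℓdef
  have hℓ1 : (1:ℝ) ≤ ℓ := by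
    rw [hℓdef, ← Real.log_exp 1]
    exact Real.log_le_log (Real.exp_pos _) hLe
  have hℓ0 : (0:ℝ) < ℓ := lt_of_lt_of_le one_pos hℓ1
  -- the β-moment
  set m := ∫ ω, Y 0 ω ^ β ∂ℙ with hmdef
  have hm0 : 0 ≤ m := integral_nonneg fun ω => Real.rpow_nonneg (hYnn 0 ω) β
  have hm : 0 < m := by
    rcases hm0.eq_or_lt with h | h
    · exfalso
      rw [← h, div_zero] at hkx
      have h1 : (1:ℝ) ≤ (k:ℝ) := by exact_mod_cast hk
      linarith
    · exact h
  have hkm : (k:ℝ) * m ≤ x ^ β := by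
    rw [div_eq_mul_inv] at hkx
    calc (k:ℝ) * m ≤ x ^ β * m⁻¹ * m := mul_le_mul_of_nonneg_right hkx hm0
      _ = x ^ β := by field_simp
  -- truncation level and exponential tilt
  set y := x / L with hydef
  have hy0 : (0:ℝ) < y := div_pos hx0 hL0
  have hxy : x / y = L := by rw [hydef]; field_simp
  set θ := (1 - β) * ℓ / y with hθdef
  have hθ0 : (0:ℝ) < θ := by positivity
  have hθy : θ * y = (1 - β) * ℓ := by rw [hθdef]; field_simp
  have hθx : θ * x = (1 - β) * ℓ * L := by
    rw [hθdef, div_mul_eq_mul_div, mul_div_assoc, hxy]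
  -- truncated variables
  set Z : ℕ → Ω → ℝ := fun i ω => min (Y i ω) y with hZdef
  have hZmeas : ∀ i, Measurable (Z i) := fun i => (hYmeas i).min measurable_const
  have hZnn : ∀ i ω, 0 ≤ Z i ω := fun i ω => le_min (hYnn i ω) hy0.le
  have hZley : ∀ i ω, Z i ω ≤ y := fun i ω => min_le_right _ _
  have hZindep : iIndepFun Z ℙ :=
    hYindep.comp (fun _ a => min a y) (fun _ => measurable_id.min measurable_const)
  -- integrability of exp (θ * Z i)
  have hZexpint : ∀ i, Integrable (fun ω => Real.exp (θ * Z i ω)) ℙ := by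
    intro i
    refine (integrable_const (Real.exp (θ * y))).mono'
      (((hZmeas i).const_mul θ).exp.aestronglyMeasurable) ?_
    filter_upwards with ω
    rw [Real.norm_eq_abs, abs_of_pos (Real.exp_pos _)]
    exact Real.exp_le_exp.2 (mul_le_mul_of_nonneg_left (hZley i ω) hθ0.le)
  -- all Z i have the same mgf
  have hmgf_eq : ∀ i, mgf (Z i) ℙ θ = mgf (Z 0) ℙ θ := by
    intro i
    have hg : Measurable (fun a : ℝ => Real.exp (θ * min a y)) :=
      ((measurable_id.min measurable_const).const_mul θ).exp
    show ∫ ω, Real.exp (θ * Z i ω) ∂ℙ = ∫ ω, Real.exp (θ * Z 0 ω) ∂ℙ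
    simp only [hZdef]
    calc ∫ ω, Real.exp (θ * min (Y i ω) y) ∂ℙ
        = ∫ a, Real.exp (θ * min a y) ∂(Measure.map (Y i) ℙ) :=
          (integral_map (hYmeas i).aemeasurable hg.aestronglyMeasurable).symm
      _ = ∫ a, Real.exp (θ * min a y) ∂(Measure.map (Y 0) ℙ) := by rw [hYid i]
      _ = ∫ ω, Real.exp (θ * min (Y 0 ω) y) ∂ℙ :=
          integral_map (hYmeas 0).aemeasurable hg.aestronglyMeasurable
  -- Z 0 is integrable with mean ≤ m * y^(1-β)
  have hZ0int : Integrable (Z 0) ℙ := by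
    refine (integrable_const y).mono' (hZmeas 0).aestronglyMeasurable ?_
    filter_upwards with ω
    rw [Real.norm_eq_abs, abs_of_nonneg (hZnn 0 ω)]
    exact hZley 0 ω
  have hZ0mean : ∫ ω, Z 0 ω ∂ℙ ≤ m * y ^ (1 - β) := by
    have hpt : ∀ ω, Z 0 ω ≤ Y 0 ω ^ β * y ^ (1 - β) := by
      intro ω
      rcases le_or_gt (Y 0 ω) y with h | h
      · rcases (hYnn 0 ω).eq_or_lt with h0 | h0
        · have hz : Z 0 ω = 0 := by
            simp only [hZdef]; rw [← h0]; simp [hy0.le]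
          rw [hz]; positivity
        · have h1 : Z 0 ω = Y 0 ω := min_eq_left h
          rw [h1]
          calc Y 0 ω = Y 0 ω ^ β * Y 0 ω ^ (1 - β) := by
                rw [← Real.rpow_add h0]; simp
            _ ≤ Y 0 ω ^ β * y ^ (1 - β) := by
                refine mul_le_mul_of_nonneg_left ?_ (Real.rpow_nonneg h0.le β)
                exact Real.rpow_le_rpow h0.le h hβ'.le
      · have h1 : Z 0 ω = y := min_eq_right h.le
        rw [h1]
        calc y = y ^ β * y ^ (1 - β) := by
              rw [← Real.rpow_add hy0]; simp
          _ ≤ Y 0 ω ^ β * y ^ (1 - β) := by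
              refine mul_le_mul_of_nonneg_right ?_ (Real.rpow_nonneg hy0.le _)
              exact Real.rpow_le_rpow hy0.le h.le hβ0.le
    calc ∫ ω, Z 0 ω ∂ℙ ≤ ∫ ω, Y 0 ω ^ β * y ^ (1 - β) ∂ℙ :=
        integral_mono hZ0int (hYβ.mul_const _) hpt
      _ = m * y ^ (1 - β) := by rw [integral_mul_const]
  -- bound on the mgf of Z 0
  have hey : (1:ℝ) ≤ Real.exp (θ * y) := by
    rw [Real.one_le_exp_iff]; positivity
  have hmgf_le : mgf (Z 0) ℙ θ ≤ Real.exp (m * y ^ (-β) * Real.exp (θ * y)) := by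
    have hpt : ∀ ω, Real.exp (θ * Z 0 ω) ≤
        1 + (Z 0 ω / y) * (Real.exp (θ * y) - 1) := by
      intro ω
      have hb0 : 0 ≤ Z 0 ω / y := div_nonneg (hZnn 0 ω) hy0.le
      have hb1 : Z 0 ω / y ≤ 1 := (div_le_one hy0).2 (hZley 0 ω)
      have hcv := convexOn_exp.2 (Set.mem_univ (0:ℝ)) (Set.mem_univ (θ * y))
        (by linarith : (0:ℝ) ≤ 1 - Z 0 ω / y) hb0 (by ring)
      simp only [smul_eq_mul, mul_zero, zero_add, Real.exp_zero, mul_one] at hcv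
      have harg : Z 0 ω / y * (θ * y) = θ * Z 0 ω := by field_simp
      rw [harg] at hcv
      linarith
    have hint2 : Integrable (fun ω => 1 + (Z 0 ω / y) * (Real.exp (θ * y) - 1)) ℙ :=
      (integrable_const 1).add ((hZ0int.div_const y).mul_const _)
    have hEZ0 : 0 ≤ ∫ ω, Z 0 ω ∂ℙ := integral_nonneg (hZnn 0)
    have hc0 : (0:ℝ) ≤ m * y ^ (-β) := by positivity
    have h2 : m * y ^ (1 - β) / y = m * y ^ (-β) := by
      have hsplit : y ^ (1 - β) = y ^ (-β) * y := by
        rw [show (1 - β : ℝ) = -β + 1 by ring, Real.rpow_add hy0, Real.rpow_one]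
      rw [hsplit, ← mul_assoc, mul_div_assoc, div_self hy0.ne', mul_one]
    calc mgf (Z 0) ℙ θ ≤ ∫ ω, (1 + (Z 0 ω / y) * (Real.exp (θ * y) - 1)) ∂ℙ :=
        integral_mono (hZexpint 0) hint2 hpt
      _ = 1 + (∫ ω, Z 0 ω ∂ℙ) / y * (Real.exp (θ * y) - 1) := by
          rw [integral_add (integrable_const 1) ((hZ0int.div_const y).mul_const _),
            integral_mul_const, integral_div]
          simp
      _ ≤ 1 + m * y ^ (-β) * Real.exp (θ * y) := by
          have h1 : (∫ ω, Z 0 ω ∂ℙ) / y ≤ m * y ^ (-β) := by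
            rw [← h2]
            exact (div_le_div_iff_of_pos_right hy0).2 hZ0mean
          have h3 : 0 ≤ (∫ ω, Z 0 ω ∂ℙ) / y := div_nonneg hEZ0 hy0.le
          nlinarith
      _ ≤ Real.exp (m * y ^ (-β) * Real.exp (θ * y)) := by
          have := Real.add_one_le_exp (m * y ^ (-β) * Real.exp (θ * y))
          linarith
  -- mgf of the sum
  have hprod : mgf (∑ i ∈ Finset.range k, Z i) ℙ θ = mgf (Z 0) ℙ θ ^ k := by
    rw [hZindep.mgf_sum hZmeas]
    rw [Finset.prod_congr rfl fun i _ => hmgf_eq i, Finset.prod_const, Finset.card_range]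
  have hcomp : x ^ β * (y ^ (-β) * Real.exp (θ * y)) = L := by
    rw [hθy, Real.rpow_neg hy0.le]
    have h1 : Real.exp ((1 - β) * ℓ) = L ^ (1 - β) := by
      rw [Real.rpow_def_of_pos hL0, hℓdef, mul_comm]
    have h2 : x ^ β * (y ^ β)⁻¹ = L ^ β := by
      rw [← div_eq_mul_inv, ← Real.div_rpow hx0.le hy0.le, hxy]
    calc x ^ β * ((y ^ β)⁻¹ * Real.exp ((1 - β) * ℓ))
        = (x ^ β * (y ^ β)⁻¹) * Real.exp ((1 - β) * ℓ) := by ring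
      _ = L ^ β * L ^ (1 - β) := by rw [h2, h1]
      _ = L := by rw [← Real.rpow_add hL0]; norm_num
  have hc : (k : ℝ) * (m * y ^ (-β) * Real.exp (θ * y)) ≤ L := by
    calc (k : ℝ) * (m * y ^ (-β) * Real.exp (θ * y))
        = ((k : ℝ) * m) * (y ^ (-β) * Real.exp (θ * y)) := by ring
      _ ≤ x ^ β * (y ^ (-β) * Real.exp (θ * y)) := by
          refine mul_le_mul_of_nonneg_right hkm ?_
          positivity
      _ = L := hcomp
  have hmgfS : mgf (∑ i ∈ Finset.range k, Z i) ℙ θ ≤ Real.exp L := by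
    rw [hprod]
    calc mgf (Z 0) ℙ θ ^ k
        ≤ Real.exp (m * y ^ (-β) * Real.exp (θ * y)) ^ k :=
          pow_le_pow_left₀ mgf_nonneg hmgf_le k
      _ = Real.exp ((k : ℝ) * (m * y ^ (-β) * Real.exp (θ * y))) := by
          rw [← Real.exp_nat_mul]
      _ ≤ Real.exp L := Real.exp_le_exp.2 hc
  -- integrability of exp (θ * sum)
  have hintS : Integrable (fun ω => Real.exp (θ * (∑ i ∈ Finset.range k, Z i) ω)) ℙ := by
    refine (integrable_const (Real.exp (θ * ((k : ℝ) * y)))).mono' ?_ ?_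
    · exact ((Finset.measurable_sum (Finset.range k) fun i _ => hZmeas i).const_mul
        θ).exp.aestronglyMeasurable |>.congr (by
          filter_upwards with ω
          simp [Finset.sum_apply])
    · filter_upwards with ω
      rw [Real.norm_eq_abs, abs_of_pos (Real.exp_pos _)]
      refine Real.exp_le_exp.2 (mul_le_mul_of_nonneg_left ?_ hθ0.le)
      rw [Finset.sum_apply]
      calc ∑ i ∈ Finset.range k, Z i ω ≤ ∑ _i ∈ Finset.range k, y :=
          Finset.sum_le_sum fun i _ => hZley i ω
        _ = (k : ℝ) * y := by simp [mul_comm]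
  -- Chernoff bound
  have hcher := measure_ge_le_exp_mul_mgf (μ := ℙ)
    (X := ∑ i ∈ Finset.range k, Z i) (t := θ) x hθ0.le hintS
  -- event inclusion
  have hsub : {ω | x < ∑ i ∈ Finset.range k, Y i ω ∧
      ∀ i ∈ Finset.range k, Y i ω ≤ y} ⊆
      {ω | x ≤ (∑ i ∈ Finset.range k, Z i) ω} := by
    intro ω hω
    obtain ⟨h1, h2⟩ := hω
    show x ≤ (∑ i ∈ Finset.range k, Z i) ω
    rw [Finset.sum_apply]
    have hEQ : ∑ i ∈ Finset.range k, Z i ω = ∑ i ∈ Finset.range k, Y i ω :=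
      Finset.sum_congr rfl fun i hi => min_eq_left (h2 i hi)
    rw [hEQ]
    exact h1.le
  -- final exponent comparison
  have hlogeK : 1 ≤ Real.log (Real.exp 1 * K) := by
    rw [Real.log_mul (Real.exp_ne_zero 1) (ne_of_gt hK0), Real.log_exp]
    have := Real.log_nonneg hK1; linarith
  have hfin : L - θ * x ≤
      -((1 - β) * L * ℓ * (1 - Real.log (Real.exp 1 * K) / ((1 - β) * ℓ))) := by
    rw [hθx]
    have hrhs : -((1 - β) * L * ℓ * (1 - Real.log (Real.exp 1 * K) / ((1 - β) * ℓ)))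
        = -((1 - β) * L * ℓ) + L * Real.log (Real.exp 1 * K) := by
      field_simp
      ring
    rw [hrhs]
    nlinarith
  calc (ℙ {ω | x < ∑ i ∈ Finset.range k, Y i ω ∧
          ∀ i ∈ Finset.range k, Y i ω ≤ y}).toReal
      ≤ (ℙ {ω | x ≤ (∑ i ∈ Finset.range k, Z i) ω}).toReal :=
        ENNReal.toReal_mono (measure_ne_top _ _) (measure_mono hsub)
    _ ≤ Real.exp (-θ * x) * mgf (∑ i ∈ Finset.range k, Z i) ℙ θ := hcher
    _ ≤ Real.exp (-θ * x) * Real.exp L :=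
        mul_le_mul_of_nonneg_left hmgfS (Real.exp_pos _).le
    _ = Real.exp (L - θ * x) := by rw [← Real.exp_add]; ring_nf
    _ ≤ Real.exp (-((1 - β) * L * ℓ *
          (1 - Real.log (Real.exp 1 * K) / ((1 - β) * ℓ)))) :=
        Real.exp_le_exp.2 hfin
end
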